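/- Let Sync be a τ-synchronizing set of T. If two runs R1 and R2 of T both have period p ≥ 2τ, then R1 and R2 have the same Lyndon root if and only if they have the same sparse-Lyndon root (the length-p fragment starting at the sparse-Lyndon position). -/

import Mathlib

open List

variable {α : Type*}

/-- `frag T a b` is the fragment `T[a..b]` (inclusive, 0-based). -/
def frag (T : List α) (a b : ℕ) : List α := (T.drop a).take (b + 1 - a)

/-- `p` is a period of `S`: `0 < p ≤ |S|` and `S[i] = S[i+p]` for all valid `i`. -/
def IsPeriodOf (p : ℕ) (S : List α) : Prop :=
  0 < p ∧ p ≤ S.length ∧ ∀ i : ℕ, i + p < S.length → S[i]? = S[i + p]?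

/-- The smallest period of `S`. -/
noncomputable def minPeriod (S : List α) : ℕ := sInf {p | IsPeriodOf p S}

/-- `T[a..b]` is a run: periodic (its smallest period occurs at least twice)
and maximal on both sides. -/
def IsRun (T : List α) (a b : ℕ) : Prop :=
  a ≤ b ∧ b < T.length ∧
  2 * minPeriod (frag T a b) ≤ b + 1 - a ∧
  (a = 0 ∨ T[a - 1]? ≠ T[a - 1 + minPeriod (frag T a b)]?) ∧
  (b = T.length - 1 ∨ T[b + 1]? ≠ T[b + 1 - minPeriod (frag T a b)]?)

/-- `W` occurs in `T` at position `s`. -/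
def OccursAt (T : List α) (s : ℕ) (W : List α) : Prop :=
  s + W.length ≤ T.length ∧ (T.drop s).take W.length = W

/-- The set of distinct square substrings of `T`. -/
def Squares (T : List α) : Set (List α) :=
  {W | ∃ X : List α, X ≠ [] ∧ W = X ++ X ∧ W <:+: T}

/-- A non-empty string is primitive if it is not a proper power. -/
def Primitive (U : List α) : Prop :=
  U ≠ [] ∧ ∀ (V : List α) (k : ℕ), U = (List.replicate k V).flatten → k = 1

/-- Cyclic rotation moving the first `c` characters to the end. -/
def rot (c : ℕ) (L : List α) : List α := L.drop c ++ L.take c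

/-- `lam` is the Lyndon root of a periodic string `S`: the lexicographically
smallest rotation of `S[0..per(S))`. -/
def LyndonRootOf [LinearOrder α] (S lam : List α) : Prop :=
  (∃ c < minPeriod S, lam = rot c (S.take (minPeriod S))) ∧
  ∀ c < minPeriod S, lam ≤ rot c (S.take (minPeriod S))

/-- Squares generated by a periodic string `U`: squares contained in `U`
whose smallest period equals that of `U`. -/
def FragSquares (U : List α) : Set (List α) :=
  {W | ∃ X : List α, X ≠ [] ∧ W = X ++ X ∧ W <:+: U ∧ minPeriod W = minPeriod U}

/-- `subper U`: the minimum of `per(X)` over squares `X²` generated by `U`. -/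
noncomputable def subper (U : List α) : ℕ :=
  sInf {q | ∃ X : List α, X ≠ [] ∧ (X ++ X) <:+: U ∧
    minPeriod (X ++ X) = minPeriod U ∧ minPeriod X = q}

/-- Fragments `[a..b]` and `[a'..b']` are neighboring:
`[a-1..b+1] ∩ [a'..b'] ≠ ∅`. -/
def Neighboring (a b a' b' : ℕ) : Prop := a ≤ b' + 1 ∧ a' ≤ b + 1

/-- `T[x..y]` is a layer of the pyramid of the neighboring runs
`F = T[a..b]` and `F' = T[a'..b']` (with `a < a'`): a subperiodic run `R`
with `subper(R) = per(F)` such that `R ∩ (F ∪ F')` is periodic with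
period `per(R)`. -/
def IsLayer (T : List α) (a b a' b' x y : ℕ) : Prop :=
  IsRun T x y ∧
  4 * subper (frag T x y) ≤ minPeriod (frag T x y) ∧
  subper (frag T x y) = minPeriod (frag T a b) ∧
  2 * minPeriod (frag T x y) ≤ min y b' + 1 - max x a ∧
  IsPeriodOf (minPeriod (frag T x y)) (frag T (max x a) (min y b'))

/-- A `τ`-synchronizing set of `T` (Kempa–Kociumaka): consistency and density. -/
def SyncSet (T : List α) (τ : ℕ) (S : Set ℕ) : Prop :=
  (∀ i ∈ S, i + 2 * τ ≤ T.length) ∧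
  (∀ i j : ℕ, i + 2 * τ ≤ T.length → j + 2 * τ ≤ T.length →
    (T.drop i).take (2 * τ) = (T.drop j).take (2 * τ) → (i ∈ S ↔ j ∈ S)) ∧
  (∀ i : ℕ, i + 3 * τ - 1 ≤ T.length →
    ((∀ k ∈ S, k < i ∨ i + τ ≤ k) ↔
      3 * minPeriod ((T.drop i).take (3 * τ - 1)) ≤ τ))

section SparseLyndonAux

private lemma lex_take_le [LinearOrder α] {u v : List α} (h : List.Lex (· < ·) u v) :
    ∀ n : ℕ, u.take n ≤ v.take n := by
  induction h with
  | nil => intro n; cases n with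
    | zero => exact le_rfl
    | succ m => exact le_of_lt (List.Lex.nil : List.Lex (· < ·) [] _)
  | @cons a l l' _ ih =>
    intro n
    match n with
    | 0 => exact le_rfl
    | m + 1 => exact List.cons_le_cons a (ih m)
  | @rel a l b l' hab =>
    intro n
    match n with
    | 0 => exact le_rfl
    | m + 1 => exact le_of_lt (List.Lex.rel hab : List.Lex (· < ·) (a :: l.take m) (b :: l'.take m))

private lemma take_le_take [LinearOrder α] {u v : List α} (h : u ≤ v) (n : ℕ) :
    u.take n ≤ v.take n := by
  rcases lt_or_eq_of_le h with h' | rfl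
  · exact lex_take_le (h' : List.Lex (· < ·) u v) n
  · exact le_rfl

private lemma rot_eq_rotate (P : List α) {c : ℕ} (hc : c ≤ P.length) :
    rot c P = P.rotate c := (List.rotate_eq_drop_append_take hc).symm

private lemma rot_length (P : List α) {c : ℕ} (hc : c ≤ P.length) :
    (rot c P).length = P.length := by
  simp [rot]; omega

private lemma getElem?_rot {p c k : ℕ} (P : List α) (hP : P.length = p) (hc : c ≤ p)
    (hk : k < p) : (rot c P)[k]? = P[(c + k) % p]? := by
  unfold rot
  have hd : (P.drop c).length = p - c := by simp [hP]
  by_cases h : k < p - c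
  · rw [Nat.mod_eq_of_lt (by omega), List.getElem?_append, if_pos (by omega),
      List.getElem?_drop]
  · have h1 : (c + k) % p = k - (p - c) := by
      have h2 : c + k - p < p := by omega
      rw [Nat.mod_eq_sub_mod (by omega), Nat.mod_eq_of_lt h2]
      omega
    rw [h1, List.getElem?_append_right (by omega), hd, List.getElem?_take,
      if_pos (by omega)]

private lemma frag_getElem? (T : List α) {a b : ℕ} (i : ℕ) (hi : i < b + 1 - a) :
    (frag T a b)[i]? = T[a + i]? := by
  rw [frag, List.getElem?_take, if_pos hi, List.getElem?_drop]

private lemma run_period (T : List α) {a b p : ℕ} (hab : a ≤ b) (hbT : b < T.length)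
    (hmin : minPeriod (frag T a b) = p) (hppos : 0 < p) :
    ∀ j, a ≤ j → j + p ≤ b → T[j]? = T[j + p]? := by
  have hne : {q | IsPeriodOf q (frag T a b)}.Nonempty := by
    by_contra h
    rw [Set.not_nonempty_iff_eq_empty] at h
    rw [minPeriod, h, Nat.sInf_empty] at hmin
    omega
  have hmem : IsPeriodOf p (frag T a b) := by
    have h0 := Nat.sInf_mem hne
    rw [show sInf {q | IsPeriodOf q (frag T a b)} = minPeriod (frag T a b) from rfl,
      hmin] at h0
    exact h0
  obtain ⟨-, hple, hper⟩ := hmem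
  have hlen : (frag T a b).length = b + 1 - a := by
    simp [frag]; omega
  intro j hj hjp
  have h1 := hper (j - a) (by omega)
  rw [frag_getElem? T (j - a) (by omega), frag_getElem? T (j - a + p) (by omega)] at h1
  rw [show a + (j - a) = j by omega, show a + (j - a + p) = j + p by omega] at h1
  exact h1

private lemma seg_eq (T : List α) {a b p i : ℕ}
    (hbT : b < T.length) (h2p : a + 2 * p ≤ b + 1) (hppos : 0 < p)
    (hper : ∀ j, a ≤ j → j + p ≤ b → T[j]? = T[j + p]?)
    (hai : a ≤ i) (hip : i < a + p) :
    (T.drop i).take p = rot (i - a) ((T.drop a).take p) := by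
  have hP : ((T.drop a).take p).length = p := by simp; omega
  apply List.ext_getElem?
  intro k
  by_cases hk : k < p
  · rw [List.getElem?_take, if_pos hk, List.getElem?_drop,
      getElem?_rot _ hP (by omega) hk]
    by_cases h : (i - a) + k < p
    · rw [Nat.mod_eq_of_lt h, List.getElem?_take, if_pos h, List.getElem?_drop]
      congr 1; omega
    · have h1 : ((i - a) + k) % p = (i - a) + k - p := by
        have h2 : (i - a) + k - p < p := by omega
        rw [Nat.mod_eq_sub_mod (by omega), Nat.mod_eq_of_lt h2]
      rw [h1, List.getElem?_take, if_pos (by omega), List.getElem?_drop]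
      have h3 := hper (i + k - p) (by omega) (by omega)
      rw [show i + k - p + p = i + k by omega] at h3
      rw [show a + ((i - a) + k - p) = i + k - p by omega, ← h3]
  · rw [List.getElem?_eq_none, List.getElem?_eq_none]
    · rw [rot_length _ (by omega)]; omega
    · have := List.length_take_le p (T.drop i); omega

private lemma rotate_eq_of_mod {p : ℕ} {L : List α} {m n : ℕ} (hL : L.length = p)
    (h : m % p = n % p) : L.rotate m = L.rotate n := by
  rw [← List.rotate_mod (l := L) (n := m), ← List.rotate_mod (l := L) (n := n), hL, h]

private lemma lyndon_transfer [LinearOrder α] {p d : ℕ} (hppos : 0 < p)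
    {S1 S2 lam : List α}
    (hm1 : minPeriod S1 = p) (hm2 : minPeriod S2 = p)
    (hl1 : (S1.take p).length = p) (hl2 : (S2.take p).length = p)
    (hrot : S2.take p = (S1.take p).rotate d)
    (h : LyndonRootOf S1 lam) : LyndonRootOf S2 lam := by
  obtain ⟨⟨c, hc, hlam⟩, hminim⟩ := h
  rw [hm1] at hc hlam hminim
  have hdm : d % p < p := Nat.mod_lt _ hppos
  have hinv : (S2.take p).rotate (p - d % p) = S1.take p := by
    rw [hrot, List.rotate_rotate]
    have harith : (d + (p - d % p)) % p = 0 % p := by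
      have h0 := Nat.div_add_mod d p
      have h1 : d + (p - d % p) = p * (d / p) + p := by omega
      rw [h1, ← Nat.mul_succ, Nat.mul_mod_right, Nat.zero_mod]
    rw [rotate_eq_of_mod hl1 harith, List.rotate_zero]
  constructor
  · refine ⟨((p - d % p) + c) % p, ?_, ?_⟩
    · rw [hm2]; exact Nat.mod_lt _ hppos
    · rw [hm2, rot_eq_rotate _ (by rw [hl2]; exact le_of_lt (Nat.mod_lt _ hppos)),
        rotate_eq_of_mod hl2 (by simp [Nat.mod_mod_of_dvd] : ((p - d % p) + c) % p % p = ((p - d % p) + c) % p),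
        ← List.rotate_rotate, hinv, hlam, rot_eq_rotate _ (by omega)]
  · intro c' hc'
    rw [hm2] at hc'
    rw [hm2, rot_eq_rotate _ (by omega), hrot, List.rotate_rotate,
      rotate_eq_of_mod hl1 (by simp [Nat.mod_mod_of_dvd] : (d + c') % p % p = (d + c') % p).symm]
    have h2 : (d + c') % p < p := Nat.mod_lt _ hppos
    have h3 := hminim ((d + c') % p) h2
    rwa [rot_eq_rotate _ (by omega)] at h3

private lemma sparse_half [LinearOrder α] {T : List α} {τ p a b i₁ i₂ m : ℕ} {S : Set ℕ}
    (hS : SyncSet T τ S) (hτ : 1 ≤ τ) (hp : 2 * τ ≤ p)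
    (hbT : b < T.length) (hA : a + 2 * p ≤ b + 1)
    (hseg1 : ∀ i, a ≤ i → i < a + p → (T.drop i).take p = rot (i - a) ((T.drop a).take p))
    (hl1 : ((T.drop a).take p).length = p)
    (hmin₁ : ∀ j ∈ S, a ≤ j → j < a + p → T.drop i₁ ≤ T.drop j)
    (hi₂S : i₂ ∈ S)
    (hfrag : (T.drop i₂).take p = ((T.drop a).take p).rotate m) :
    (T.drop i₁).take p ≤ (T.drop i₂).take p := by
  have hppos : 0 < p := by omega
  have hep : m % p < p := Nat.mod_lt _ hppos
  have h1 : (T.drop (a + m % p)).take p = (T.drop i₂).take p := by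
    rw [hseg1 (a + m % p) (by omega) (by omega), show a + m % p - a = m % p by omega,
      rot_eq_rotate _ (by rw [hl1]; omega), hfrag]
    exact rotate_eq_of_mod hl1 (by simp [Nat.mod_mod_of_dvd])
  have htake : (T.drop i₂).take (2 * τ) = (T.drop (a + m % p)).take (2 * τ) := by
    have h2 := congrArg (List.take (2 * τ)) h1
    rw [List.take_take, List.take_take, Nat.min_eq_left hp] at h2
    exact h2.symm
  have hmem : (a + m % p) ∈ S :=
    (hS.2.1 i₂ (a + m % p) (hS.1 i₂ hi₂S) (by omega) htake).mp hi₂S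
  rw [← h1]
  exact take_le_take (hmin₁ (a + m % p) hmem (by omega) (by omega)) p

end SparseLyndonAux
/-- Two runs with period `p ≥ 2τ` have the same Lyndon root iff they have the
same sparse-Lyndon root. -/
theorem same_lyndon_iff_same_sparse_lyndon [LinearOrder α] (T : List α)
    (τ : ℕ) (S : Set ℕ) (a b a' b' p i₁ i₂ : ℕ)
    (hτ : 1 ≤ τ) (hS : SyncSet T τ S)
    (h1 : IsRun T a b) (h2 : IsRun T a' b')
    (hp1 : minPeriod (frag T a b) = p) (hp2 : minPeriod (frag T a' b') = p)
    (hp : 2 * τ ≤ p)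
    (hi₁ : i₁ ∈ S ∧ a ≤ i₁ ∧ i₁ < a + p ∧
      ∀ j ∈ S, a ≤ j → j < a + p → T.drop i₁ ≤ T.drop j)
    (hi₂ : i₂ ∈ S ∧ a' ≤ i₂ ∧ i₂ < a' + p ∧
      ∀ j ∈ S, a' ≤ j → j < a' + p → T.drop i₂ ≤ T.drop j) :
    (∀ lam : List α, LyndonRootOf (frag T a b) lam ↔
      LyndonRootOf (frag T a' b') lam) ↔
    (T.drop i₁).take p = (T.drop i₂).take p := by
  obtain ⟨hi₁S, hai₁, hi₁p, hmin₁⟩ := hi₁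
  obtain ⟨hi₂S, hai₂, hi₂p, hmin₂⟩ := hi₂
  obtain ⟨hab, hbT, h2p1, -, -⟩ := h1
  obtain ⟨hab', hbT', h2p2, -, -⟩ := h2
  rw [hp1] at h2p1
  rw [hp2] at h2p2
  have hppos : 0 < p := by omega
  have hA : a + 2 * p ≤ b + 1 := by omega
  have hA' : a' + 2 * p ≤ b' + 1 := by omega
  have hper1 := run_period T hab hbT hp1 hppos
  have hper2 := run_period T hab' hbT' hp2 hppos
  have hl1 : ((T.drop a).take p).length = p := by simp; omega
  have hl2 : ((T.drop a').take p).length = p := by simp; omega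
  have hseg1 : ∀ i, a ≤ i → i < a + p → (T.drop i).take p = rot (i - a) ((T.drop a).take p) :=
    fun i hx hy => seg_eq T hbT hA hppos hper1 hx hy
  have hseg2 : ∀ i, a' ≤ i → i < a' + p → (T.drop i).take p = rot (i - a') ((T.drop a').take p) :=
    fun i hx hy => seg_eq T hbT' hA' hppos hper2 hx hy
  have hft1 : (frag T a b).take p = (T.drop a).take p := by
    rw [frag, List.take_take]; congr 1; omega
  have hft2 : (frag T a' b').take p = (T.drop a').take p := by
    rw [frag, List.take_take]; congr 1; omega
  have rot_inv : ∀ c c' : ℕ, c < p → c' < p →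
      ((T.drop a).take p).rotate c = ((T.drop a').take p).rotate c' →
      (T.drop a').take p = ((T.drop a).take p).rotate (c + (p - c')) ∧
      (T.drop a).take p = ((T.drop a').take p).rotate (c' + (p - c)) := by
    intro c c' hc hc' hrr
    constructor
    · rw [← List.rotate_rotate, hrr, List.rotate_rotate, show c' + (p - c') = p by omega]
      exact ((rotate_eq_of_mod hl2 (by simp : p % p = 0 % p)).trans
        (List.rotate_zero _)).symm
    · rw [← List.rotate_rotate, ← hrr, List.rotate_rotate, show c + (p - c) = p by omega]
      exact ((rotate_eq_of_mod hl1 (by simp : p % p = 0 % p)).trans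
        (List.rotate_zero _)).symm
  constructor
  · -- same Lyndon root → same sparse root
    intro hl
    obtain ⟨c₀, hc₀mem, hc₀min⟩ := Finset.exists_min_image (Finset.range p)
      (fun c => rot c ((T.drop a).take p)) ⟨0, Finset.mem_range.mpr hppos⟩
    have hc₀ : c₀ < p := Finset.mem_range.mp hc₀mem
    have hLR : LyndonRootOf (frag T a b) (rot c₀ ((T.drop a).take p)) := by
      rw [LyndonRootOf, hp1, hft1]
      exact ⟨⟨c₀, hc₀, rfl⟩, fun c hc => hc₀min c (Finset.mem_range.mpr hc)⟩
    have hLR2 := (hl _).mp hLR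
    rw [LyndonRootOf, hp2, hft2] at hLR2
    obtain ⟨⟨c₂, hc₂, heq⟩, -⟩ := hLR2
    have hrr : ((T.drop a).take p).rotate c₀ = ((T.drop a').take p).rotate c₂ := by
      rw [← rot_eq_rotate _ (by rw [hl1]; omega), ← rot_eq_rotate _ (by rw [hl2]; omega),
        ← heq]
    obtain ⟨hd, hd2⟩ := rot_inv c₀ c₂ hc₀ hc₂ hrr
    have hfragA : (T.drop i₂).take p =
        ((T.drop a).take p).rotate ((c₀ + (p - c₂)) + (i₂ - a')) := by
      rw [hseg2 i₂ hai₂ hi₂p, rot_eq_rotate _ (by rw [hl2]; omega), hd, List.rotate_rotate]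
    have hfragB : (T.drop i₁).take p =
        ((T.drop a').take p).rotate ((c₂ + (p - c₀)) + (i₁ - a)) := by
      rw [hseg1 i₁ hai₁ hi₁p, rot_eq_rotate _ (by rw [hl1]; omega), hd2, List.rotate_rotate]
    exact le_antisymm
      (sparse_half hS hτ hp hbT hA hseg1 hl1 hmin₁ hi₂S hfragA)
      (sparse_half hS hτ hp hbT' hA' hseg2 hl2 hmin₂ hi₁S hfragB)
  · -- same sparse root → same Lyndon root
    intro heq
    have hrr : ((T.drop a).take p).rotate (i₁ - a) = ((T.drop a').take p).rotate (i₂ - a') := by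
      rw [← rot_eq_rotate _ (by rw [hl1]; omega), ← rot_eq_rotate _ (by rw [hl2]; omega),
        ← hseg1 i₁ hai₁ hi₁p, ← hseg2 i₂ hai₂ hi₂p, heq]
    obtain ⟨hd, hd2⟩ := rot_inv (i₁ - a) (i₂ - a') (by omega) (by omega) hrr
    intro lam
    constructor
    · intro h
      exact lyndon_transfer hppos hp1 hp2 (by rw [hft1]; exact hl1)
        (by rw [hft2]; exact hl2) (by rw [hft1, hft2]; exact hd) h
    · intro h
      exact lyndon_transfer hppos hp2 hp1 (by rw [hft2]; exact hl2)
        (by rw [hft1]; exact hl1) (by rw [hft2, hft1]; exact hd2) h
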